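/- Equality case of Kato's inequality (flat model): Let E be a real inner product space, n a natural number, V : EuclideanSpace ℝ (Fin n) → E differentiable at x with V x ≠ 0. Then the following are equivalent: (i) for every direction u, |fderiv ℝ (fun y => ‖V y‖) x u| = ‖(fderiv ℝ V x) u‖; (ii) there exists a linear functional ω : EuclideanSpace ℝ (Fin n) →ₗ[ℝ] ℝ such that (fderiv ℝ V x) u = (ω u) • (V x) for every u. In other words, Kato's inequality is an equality at x exactly when the derivative of V at x is of the form ω ⊗ V x for a real 1-form ω. -/

import Mathlib

open scoped RealInnerProductSpace

/-- Derivative of the pointwise norm in a real inner product space. -/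
theorem kato_fderiv_norm_apply {E : Type*} [NormedAddCommGroup E] [InnerProductSpace ℝ E]
    {n : ℕ} {V : EuclideanSpace ℝ (Fin n) → E} {x : EuclideanSpace ℝ (Fin n)}
    (hV : DifferentiableAt ℝ V x) (hx : V x ≠ 0) (u : EuclideanSpace ℝ (Fin n)) :
    fderiv ℝ (fun y => ‖V y‖) x u = ⟪V x, fderiv ℝ V x u⟫ / ‖V x‖ := by
  have hg : HasFDerivAt (fun y => ⟪V y, V y⟫)
      ((2:ℝ) • ((innerSL ℝ (V x)).comp (fderiv ℝ V x))) x := by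
    have := hV.hasFDerivAt.inner ℝ hV.hasFDerivAt
    refine this.congr_fderiv (Eq.symm ?_)
    ext v
    simp only [ContinuousLinearMap.smul_apply, ContinuousLinearMap.comp_apply, innerSL_apply_apply,
      ContinuousLinearMap.coe_comp', Function.comp_apply,
      fderivInnerCLM_apply, ContinuousLinearMap.prod_apply, smul_eq_mul]
    rw [real_inner_comm (fderiv ℝ V x v) (V x)]
    ring
  have hgx : ⟪V x, V x⟫ ≠ 0 := by
    simpa [real_inner_self_eq_norm_sq] using pow_ne_zero 2 (norm_ne_zero_iff.2 hx)
  have hsqrt : HasDerivAt Real.sqrt (1 / (2 * Real.sqrt ⟪V x, V x⟫)) ⟪V x, V x⟫ :=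
    Real.hasDerivAt_sqrt hgx
  have hcomp : HasFDerivAt (fun y => Real.sqrt ⟪V y, V y⟫)
      ((1 / (2 * Real.sqrt ⟪V x, V x⟫)) • ((2:ℝ) • ((innerSL ℝ (V x)).comp (fderiv ℝ V x)))) x :=
    hsqrt.comp_hasFDerivAt x hg
  have heq : (fun y => ‖V y‖) = fun y => Real.sqrt ⟪V y, V y⟫ := by
    funext y
    rw [real_inner_self_eq_norm_sq, Real.sqrt_sq (norm_nonneg _)]
  rw [heq, hcomp.fderiv]
  have hs : Real.sqrt ⟪V x, V x⟫ = ‖V x‖ := by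
    rw [real_inner_self_eq_norm_sq, Real.sqrt_sq (norm_nonneg _)]
  have hnx : ‖V x‖ ≠ 0 := norm_ne_zero_iff.2 hx
  simp only [ContinuousLinearMap.smul_apply, ContinuousLinearMap.comp_apply, innerSL_apply_apply, hs,
    smul_eq_mul]
  field_simp

/-- Equality case of Kato's inequality (flat model): for `V` differentiable at `x` with
`V x ≠ 0`, equality `|∇‖V‖| = ‖∇V‖` holds in every direction iff the derivative of `V` at `x`
has the form `ω ⊗ V x` for a real 1-form `ω`. -/
theorem kato_equality_iff_flat {E : Type*} [NormedAddCommGroup E] [InnerProductSpace ℝ E]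
    {n : ℕ} (V : EuclideanSpace ℝ (Fin n) → E) (x : EuclideanSpace ℝ (Fin n))
    (hV : DifferentiableAt ℝ V x) (hx : V x ≠ 0) :
    (∀ u : EuclideanSpace ℝ (Fin n),
        |fderiv ℝ (fun y => ‖V y‖) x u| = ‖(fderiv ℝ V x) u‖) ↔
      (∃ ω : EuclideanSpace ℝ (Fin n) →ₗ[ℝ] ℝ,
        ∀ u : EuclideanSpace ℝ (Fin n), (fderiv ℝ V x) u = (ω u) • (V x)) := by
  have hnx : (0:ℝ) < ‖V x‖ := norm_pos_iff.2 hx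
  constructor
  · intro h
    have key : ∀ u, ∃ t : ℝ, (fderiv ℝ V x) u = t • V x := by
      intro u
      have hu := h u
      rw [kato_fderiv_norm_apply hV hx u, abs_div, abs_of_nonneg hnx.le,
        div_eq_iff hnx.ne'] at hu
      set w := (fderiv ℝ V x) u with hw
      rcases le_or_gt 0 (⟪V x, w⟫) with hpos | hneg
      · have h1 : ⟪V x, w⟫ = ‖V x‖ * ‖w‖ := by
          rw [← abs_of_nonneg hpos, hu]; ring
        have h2 := inner_eq_norm_mul_iff_real.1 h1
        have h3 : (‖V x‖⁻¹ : ℝ) • (‖w‖ • V x) = (‖V x‖⁻¹ : ℝ) • (‖V x‖ • w) := by rw [h2]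
        rw [smul_smul, smul_smul, inv_mul_cancel₀ hnx.ne', one_smul] at h3
        exact ⟨‖V x‖⁻¹ * ‖w‖, h3.symm⟩
      · have h1 : ⟪V x, -w⟫ = ‖V x‖ * ‖-w‖ := by
          rw [inner_neg_right, norm_neg, ← abs_of_neg hneg, hu]; ring
        have h2 := inner_eq_norm_mul_iff_real.1 h1
        rw [norm_neg] at h2
        have h3 : (‖V x‖⁻¹ : ℝ) • (‖w‖ • V x) = (‖V x‖⁻¹ : ℝ) • (‖V x‖ • (-w)) := by rw [h2]
        rw [smul_smul, smul_smul, inv_mul_cancel₀ hnx.ne', one_smul] at h3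
        refine ⟨-(‖V x‖⁻¹ * ‖w‖), ?_⟩
        rw [neg_smul, h3, neg_neg]
    choose t ht using key
    have hinj : Function.Injective fun c : ℝ => c • V x := smul_left_injective ℝ hx
    refine ⟨{ toFun := t
              map_add' := by
                intro a b
                apply hinj
                simp only []
                rw [← ht (a + b), map_add, ht a, ht b, add_smul]
              map_smul' := by
                intro c a
                apply hinj
                simp only [RingHom.id_apply]
                rw [← ht (c • a), map_smul, ht a, smul_smul, smul_eq_mul] }, fun u => ht u⟩
  · rintro ⟨ω, hω⟩ u
    rw [kato_fderiv_norm_apply hV hx u, hω u, real_inner_smul_right,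
      real_inner_self_eq_norm_sq, norm_smul, Real.norm_eq_abs]
    rw [abs_div, abs_mul, abs_of_nonneg (sq_nonneg (‖V x‖)), abs_of_nonneg hnx.le,
      pow_two, ← mul_assoc, mul_div_assoc, div_self hnx.ne', mul_one]
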